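/- For a connected regular graph on N vertices with unit edge resistors, the average commute time of the simple random walk between vertices α and β equals N·κ·R(α,β), where κ is the degree and R(α,β) the effective resistance. -/

import Mathlib

open Matrix Finset

/-- The four Moore–Penrose pseudoinverse conditions for real matrices. -/
def IsMoorePenrose {V : Type*} [Fintype V] [DecidableEq V] (L Lp : Matrix V V ℝ) : Prop :=
  L * Lp * L = L ∧ Lp * L * Lp = Lp ∧ (L * Lp)ᵀ = L * Lp ∧ (Lp * L)ᵀ = Lp * L

/-- Effective resistance between two nodes, from the pseudoinverse of the Laplacian. -/
def effRes {V : Type*} (Lp : Matrix V V ℝ) (α β : V) : ℝ :=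
  Lp α α + Lp β β - 2 * Lp α β

/-- The Moore–Penrose pseudoinverse is unique. -/
lemma mp_unique {V : Type*} [Fintype V] [DecidableEq V] (L P Q : Matrix V V ℝ)
    (hP : IsMoorePenrose L P) (hQ : IsMoorePenrose L Q) : P = Q := by
  obtain ⟨hP1, hP2, hP3, hP4⟩ := hP
  obtain ⟨hQ1, hQ2, hQ3, hQ4⟩ := hQ
  have t1 : P * Pᵀ * Lᵀ = P := by
    rw [mul_assoc, ← transpose_mul, hP3, ← mul_assoc]; exact hP2
  have t2 : Lᵀ * Qᵀ * Lᵀ = Lᵀ := by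
    rw [← transpose_mul, ← transpose_mul, ← mul_assoc, hQ1]
  have s1 : Lᵀ * Qᵀ * Q = Q := by
    rw [← transpose_mul, hQ4]; exact hQ2
  have s2 : Lᵀ * Pᵀ * Lᵀ = Lᵀ := by
    rw [← transpose_mul, ← transpose_mul, ← mul_assoc, hP1]
  have e1 : P = P * L * Q := by
    calc P = P * Pᵀ * Lᵀ := t1.symm
      _ = P * Pᵀ * (Lᵀ * Qᵀ * Lᵀ) := by rw [t2]
      _ = (P * Pᵀ * Lᵀ) * (Qᵀ * Lᵀ) := by simp only [mul_assoc]
      _ = P * (Qᵀ * Lᵀ) := by rw [t1]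
      _ = P * (L * Q)ᵀ := by rw [transpose_mul]
      _ = P * (L * Q) := by rw [hQ3]
      _ = P * L * Q := by rw [mul_assoc]
  have e2 : Q = P * L * Q := by
    calc Q = Lᵀ * Qᵀ * Q := s1.symm
      _ = (Lᵀ * Pᵀ * Lᵀ) * Qᵀ * Q := by rw [s2]
      _ = Lᵀ * Pᵀ * (Lᵀ * Qᵀ * Q) := by simp only [mul_assoc]
      _ = (P * L)ᵀ * (Lᵀ * Qᵀ * Q) := by rw [transpose_mul]
      _ = (P * L) * (Lᵀ * Qᵀ * Q) := by rw [hP4]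
      _ = P * L * Q := by rw [s1]
  exact e1.trans e2.symm

/-- The pseudoinverse of a symmetric matrix is symmetric. -/
lemma mp_symm {V : Type*} [Fintype V] [DecidableEq V] (L Lp : Matrix V V ℝ)
    (hs : Lᵀ = L) (h : IsMoorePenrose L Lp) : Lpᵀ = Lp := by
  obtain ⟨h1, h2, h3, h4⟩ := h
  refine mp_unique L Lpᵀ Lp ⟨?_, ?_, ?_, ?_⟩ ⟨h1, h2, h3, h4⟩
  · have := congrArg Matrix.transpose h1
    simp only [transpose_mul, hs] at this
    rw [← mul_assoc] at this
    exact this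
  · have := congrArg Matrix.transpose h2
    simp only [transpose_mul, hs] at this
    rw [← mul_assoc] at this
    exact this
  · calc (L * Lpᵀ)ᵀ = Lp * Lᵀ := by rw [transpose_mul, transpose_transpose]
      _ = Lp * L := by rw [hs]
      _ = (Lp * L)ᵀ := h4.symm
      _ = Lᵀ * Lpᵀ := by rw [transpose_mul]
      _ = L * Lpᵀ := by rw [hs]
  · calc (Lpᵀ * L)ᵀ = Lᵀ * Lp := by rw [transpose_mul, transpose_transpose]
      _ = L * Lp := by rw [hs]
      _ = (L * Lp)ᵀ := h3.symm
      _ = Lpᵀ * Lᵀ := by rw [transpose_mul]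
      _ = Lpᵀ * L := by rw [hs]

lemma key_formula {V : Type*} [Fintype V] [DecidableEq V]
    (G : SimpleGraph V) [DecidableRel G.Adj] (κ : ℕ) (hκ : 0 < κ)
    (hconn : G.Connected) (hreg : G.IsRegularOfDegree κ)
    (H : V → V → ℝ)
    (hH0 : ∀ β : V, H β β = 0)
    (hHrec : ∀ α β : V, α ≠ β →
      H α β = 1 + (1 / (κ : ℝ)) * ∑ γ ∈ G.neighborFinset α, H γ β)
    (Lp : Matrix V V ℝ) (hLp : IsMoorePenrose (G.lapMatrix ℝ) Lp)
    (α β : V) :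
    H α β = (κ : ℝ) * (∑ y, Lp α y) - (κ : ℝ) * (∑ y, Lp β y)
      - (Fintype.card V : ℝ) * (κ : ℝ) * (Lp α β - Lp β β) := by
  have hκ' : (κ : ℝ) ≠ 0 := Nat.cast_ne_zero.mpr hκ.ne'
  set L : Matrix V V ℝ := G.lapMatrix ℝ with hLdef
  set f : V → ℝ := fun x => (κ : ℝ) - if x = β then (Fintype.card V : ℝ) * κ else 0 with hfdef
  set h : V → ℝ := fun x => H x β with hhdef
  -- Step 1: L *ᵥ h = f
  have hne : ∀ x, x ≠ β → (L *ᵥ h) x = (κ : ℝ) := by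
    intro x hx
    rw [SimpleGraph.lapMatrix_mulVec_apply, hreg x]
    have : h x = 1 + (1 / (κ : ℝ)) * ∑ γ ∈ G.neighborFinset x, h γ := hHrec x β hx
    rw [this]
    field_simp
    ring
  have hcol : ∀ y, ∑ x, L x y = 0 := by
    intro y
    have h1 := congrFun (G.lapMatrix_mulVec_const_eq_zero (R := ℝ)) y
    simp only [mulVec, dotProduct, mul_one, Pi.zero_apply] at h1
    calc ∑ x, L x y = ∑ x, L y x :=
          Finset.sum_congr rfl fun x _ => (G.isSymm_lapMatrix (R := ℝ)).apply y x
      _ = 0 := h1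
  have hsum : ∑ x, (L *ᵥ h) x = 0 := by
    simp only [mulVec, dotProduct]
    rw [Finset.sum_comm]
    simp only [← Finset.sum_mul, hcol]
    simp
  have hstep : L *ᵥ h = f := by
    funext x
    by_cases hx : x = β
    · subst hx
      have h2 := Finset.add_sum_erase univ (L *ᵥ h) (mem_univ x)
      have h3 : ∑ y ∈ univ.erase x, (L *ᵥ h) y = ((Fintype.card V : ℝ) - 1) * κ := by
        rw [Finset.sum_congr rfl (fun y hy => hne y (Finset.ne_of_mem_erase hy)),
          Finset.sum_const, Finset.card_erase_of_mem (mem_univ x), Finset.card_univ,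
          nsmul_eq_mul]
        have hcard : 1 ≤ Fintype.card V := Fintype.card_pos_iff.mpr ⟨x⟩
        push_cast [Nat.cast_sub hcard]
        ring
      rw [hsum] at h2
      simp only [hfdef]
      rw [if_true]
      linarith
    · rw [hne x hx]
      simp [hfdef, hx]
  -- Step 2: L *ᵥ (Lp *ᵥ f) = f
  have hproj : L *ᵥ (Lp *ᵥ f) = f := by
    conv_lhs => rw [← hstep]
    rw [mulVec_mulVec, mulVec_mulVec, hLp.1, hstep]
  -- Step 3: kernel argument
  have hg : Matrix.toLin' L (h - Lp *ᵥ f) = 0 := by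
    rw [Matrix.toLin'_apply, mulVec_sub, hstep, hproj, sub_self]
  have hcst := (G.lapMatrix_mulVec_eq_zero_iff_forall_reachable (x := h - Lp *ᵥ f)).mp
    (by rwa [Matrix.toLin'_apply] at hg)
    α β (hconn.preconnected α β)
  simp only [Pi.sub_apply, hhdef] at hcst
  -- Step 4: compute (Lp *ᵥ f)
  have hval : ∀ x, (Lp *ᵥ f) x
      = (κ : ℝ) * (∑ y, Lp x y) - (Fintype.card V : ℝ) * κ * Lp x β := by
    intro x
    simp only [mulVec, dotProduct, hfdef, mul_sub, mul_ite, mul_zero,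
      Finset.sum_sub_distrib, Finset.sum_ite_eq', mem_univ, if_true]
    rw [← Finset.sum_mul]
    ring
  have hHβ : H β β = 0 := hH0 β
  have := hcst
  rw [hval α, hval β, hHβ] at this
  linarith

/-- For a connected `κ`-regular graph on `N` vertices with unit edge resistors, the average
commute time `n(α,β) = m(β|α) + m(α|β)` of the simple random walk (where the expected
first-passage times `H = m(·|·)` satisfy the standard linear system) equals
`N κ R(α,β)`, with `R` the effective resistance. -/
theorem commute_time_eq_resistance {V : Type*} [Fintype V] [DecidableEq V]
    (G : SimpleGraph V) [DecidableRel G.Adj] (κ : ℕ) (hκ : 0 < κ)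
    (hconn : G.Connected) (hreg : G.IsRegularOfDegree κ)
    (H : V → V → ℝ)
    (hH0 : ∀ β : V, H β β = 0)
    (hHrec : ∀ α β : V, α ≠ β →
      H α β = 1 + (1 / (κ : ℝ)) * ∑ γ ∈ G.neighborFinset α, H γ β)
    (Lp : Matrix V V ℝ) (hLp : IsMoorePenrose (G.lapMatrix ℝ) Lp)
    (α β : V) :
    H α β + H β α = (Fintype.card V : ℝ) * (κ : ℝ) * effRes Lp α β := by
  have hs : Lpᵀ = Lp := mp_symm (G.lapMatrix ℝ) Lp (G.isSymm_lapMatrix (R := ℝ)) hLp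
  have hsym : Lp β α = Lp α β := by
    rw [← Matrix.transpose_apply Lp α β, hs]
  have k1 := key_formula G κ hκ hconn hreg H hH0 hHrec Lp hLp α β
  have k2 := key_formula G κ hκ hconn hreg H hH0 hHrec Lp hLp β α
  rw [hsym] at k2
  rw [k1, k2, effRes]
  ring
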